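/- For uniform sampling without replacement of k from n items with weights w_i = 1 (i < n) and w_n = ℓ, the variance of the total estimate satisfies VΣ ≥ n·ℓ²/k − (ℓ + n − 1)². -/

import Mathlib

open Finset

lemma card_subsets_containing (n k : ℕ) (hk1 : 1 ≤ k) (i₀ : Fin n) :
    (((Finset.univ : Finset (Fin n)).powersetCard k).filter (fun S => i₀ ∈ S)).card
      = (n - 1).choose (k - 1) := by
  have h := Finset.card_bij' (fun (S : Finset (Fin n)) _ => S.erase i₀)
    (fun (S : Finset (Fin n)) _ => insert i₀ S)
    (s := (((Finset.univ : Finset (Fin n)).powersetCard k).filter (fun S => i₀ ∈ S)))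
    (t := ((Finset.univ.erase i₀ : Finset (Fin n)).powersetCard (k - 1)))
    (hi := ?_) (hj := ?_) (left_inv := ?_) (right_inv := ?_)
  · rw [h, Finset.card_powersetCard, Finset.card_erase_of_mem (Finset.mem_univ i₀),
      Finset.card_univ, Fintype.card_fin]
  · intro S hS
    simp only [Finset.mem_filter, Finset.mem_powersetCard] at hS
    obtain ⟨⟨_, hcard⟩, hmem⟩ := hS
    rw [Finset.mem_powersetCard]
    constructor
    · intro x hx
      simp only [Finset.mem_erase] at hx ⊢
      exact ⟨hx.1, Finset.mem_univ x⟩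
    · rw [Finset.card_erase_of_mem hmem, hcard]
  · intro S hS
    rw [Finset.mem_powersetCard] at hS
    obtain ⟨hsub, hcard⟩ := hS
    have hi₀ : i₀ ∉ S := fun h => by simpa using (hsub h)
    simp only [Finset.mem_filter, Finset.mem_powersetCard]
    refine ⟨⟨fun x _ => Finset.mem_univ x, ?_⟩, Finset.mem_insert_self _ _⟩
    rw [Finset.card_insert_of_notMem hi₀, hcard]
    omega
  · intro S hS
    simp only [Finset.mem_filter] at hS
    exact Finset.insert_erase hS.2
  · intro S hS
    rw [Finset.mem_powersetCard] at hS
    have hi₀ : i₀ ∉ S := fun h => by simpa using (hS.1 h)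
    exact Finset.erase_insert hi₀

/-- Uniform sampling without replacement of `k` of `n` items with weights
`w i = 1` for `i ≠ i₀` and `w i₀ = ℓ ≥ 0`: the variance of the estimate of the
total satisfies `VΣ ≥ n·ℓ²/k − (ℓ + n − 1)²`. -/
theorem uniform_sampling_total_variance_lower_bound
    (n k : ℕ) (hk1 : 1 ≤ k) (hkn : k ≤ n)
    (ℓ : ℝ) (hℓ : 0 ≤ ℓ) (w : Fin n → ℝ) (i₀ : Fin n)
    (hw₀ : w i₀ = ℓ) (hw1 : ∀ i, i ≠ i₀ → w i = 1) :
    (∑ S ∈ (Finset.univ : Finset (Fin n)).powersetCard k,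
        (∑ i ∈ S, w i * n / k) ^ 2) / (n.choose k : ℝ)
      - (ℓ + (n : ℝ) - 1) ^ 2
    ≥ (n : ℝ) * ℓ ^ 2 / k - (ℓ + (n : ℝ) - 1) ^ 2 := by
  have hn1 : 1 ≤ n := le_trans hk1 hkn
  have hwpos : ∀ i, 0 ≤ w i := by
    intro i
    by_cases h : i = i₀
    · rw [h, hw₀]; exact hℓ
    · rw [hw1 i h]; exact zero_le_one
  have hkpos : (0:ℝ) < k := by exact_mod_cast hk1
  have hchoose : (0:ℝ) < (n.choose k : ℝ) := by
    exact_mod_cast Nat.choose_pos hkn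
  rw [ge_iff_le, sub_le_sub_iff_right, div_le_div_iff₀ hkpos hchoose]
  -- lower bound the sum by the sum over sets containing i₀
  set T := (((Finset.univ : Finset (Fin n)).powersetCard k).filter (fun S => i₀ ∈ S))
  have hsub : T ⊆ (Finset.univ : Finset (Fin n)).powersetCard k := Finset.filter_subset _ _
  have hterm : ∀ S ∈ T, (ℓ * n / k) ^ 2 ≤ (∑ i ∈ S, w i * n / k) ^ 2 := by
    intro S hS
    simp only [T, Finset.mem_filter] at hS
    have h1 : ℓ * n / k ≤ ∑ i ∈ S, w i * n / k := by
      rw [← hw₀]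
      refine Finset.single_le_sum (f := fun i => w i * n / k) ?_ hS.2
      intro i _
      exact div_nonneg (mul_nonneg (hwpos i) (Nat.cast_nonneg n)) hkpos.le
    have h0 : (0:ℝ) ≤ ℓ * n / k := by positivity
    exact pow_le_pow_left₀ h0 h1 2
  have hsum : (T.card : ℝ) * (ℓ * n / k) ^ 2
      ≤ ∑ S ∈ (Finset.univ : Finset (Fin n)).powersetCard k, (∑ i ∈ S, w i * n / k) ^ 2 := by
    calc (T.card : ℝ) * (ℓ * n / k) ^ 2 = ∑ _S ∈ T, (ℓ * n / k) ^ 2 := by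
          rw [Finset.sum_const, nsmul_eq_mul]
      _ ≤ ∑ S ∈ T, (∑ i ∈ S, w i * n / k) ^ 2 := Finset.sum_le_sum hterm
      _ ≤ _ := Finset.sum_le_sum_of_subset_of_nonneg hsub (fun S _ _ => by positivity)
  have hcard : (T.card : ℝ) = ((n-1).choose (k-1) : ℝ) := by
    exact_mod_cast congrArg (Nat.cast (R := ℝ)) (card_subsets_containing n k hk1 i₀)
  -- choose identity: k * C(n,k) = n * C(n-1,k-1)
  have hid : (k : ℝ) * (n.choose k : ℝ) = (n : ℝ) * ((n-1).choose (k-1) : ℝ) := by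
    have := Nat.add_one_mul_choose_eq (n-1) (k-1)
    have hn : n - 1 + 1 = n := by omega
    have hk : k - 1 + 1 = k := by omega
    rw [hn, hk] at this
    exact_mod_cast (mul_comm k (n.choose k)).trans this.symm
  have heq : (n:ℝ) * ℓ ^ 2 * (n.choose k : ℝ)
      = ((n-1).choose (k-1) : ℝ) * (ℓ * n / k) ^ 2 * k := by
    field_simp
    linear_combination ℓ^2 * hid
  calc (n:ℝ) * ℓ ^ 2 * (n.choose k : ℝ)
      = (T.card : ℝ) * (ℓ * n / k) ^ 2 * k := by rw [hcard, heq]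
    _ ≤ (∑ S ∈ (Finset.univ : Finset (Fin n)).powersetCard k, (∑ i ∈ S, w i * n / k) ^ 2) * k :=
        mul_le_mul_of_nonneg_right hsum hkpos.le
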